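/- Let F1 and F2 be finite subsets of ℤ² such that F1 is uniquely determined by its row and column sums, |F1| = |F2|, F1 ∩ F2 = ∅, and the error in the line sums equals 2α for a positive integer α. Then for every positive integer i, the i-th largest row sum of F1 (if F1 has at least i nonempty rows) is at most α/i; in particular, the number of rows containing elements of F1 is at most α, and likewise the number of columns containing elements of F1 is at most α. -/

import Mathlib

/-- Number of elements of `F` in row `i` (points with first coordinate `i`). -/
def rowSum (F : Finset (ℤ × ℤ)) (i : ℤ) : ℕ := (F.filter (fun p => p.1 = i)).card

/-- Number of elements of `F` in column `j` (points with second coordinate `j`). -/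
def colSum (F : Finset (ℤ × ℤ)) (j : ℤ) : ℕ := (F.filter (fun p => p.2 = j)).card

/-- The total error in the line sums of `F` and `G`:
`∑ i |r_i(F) − r_i(G)| + ∑ j |c_j(F) − c_j(G)|`. -/
noncomputable def lineError (F G : Finset (ℤ × ℤ)) : ℤ :=
  (∑ᶠ i : ℤ, |(rowSum F i : ℤ) - (rowSum G i : ℤ)|) +
  (∑ᶠ j : ℤ, |(colSum F j : ℤ) - (colSum G j : ℤ)|)

/-- `F` is uniquely determined by its row and column sums. -/
def UniquelyDetermined (F : Finset (ℤ × ℤ)) : Prop :=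
  ∀ G : Finset (ℤ × ℤ),
    (∀ i, rowSum G i = rowSum F i) → (∀ j, colSum G j = colSum F j) → G = F


set_option maxHeartbeats 1000000



lemma sum_rowSum (F : Finset (ℤ × ℤ)) (S : Finset ℤ) :
    ∑ i ∈ S, rowSum F i = (F.filter (fun p => p.1 ∈ S)).card := by
  rw [Finset.card_eq_sum_card_fiberwise (f := Prod.fst) (s := F.filter (fun p => p.1 ∈ S)) (t := S)
    (fun p hp => (Finset.mem_filter.1 hp).2)]
  apply Finset.sum_congr rfl
  intro i hi
  unfold rowSum
  rw [Finset.filter_filter]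
  congr 1
  apply Finset.filter_congr
  intro p hp
  constructor
  · intro h; exact ⟨h ▸ hi, h⟩
  · exact fun h => h.2

lemma sum_colSum (F : Finset (ℤ × ℤ)) (S : Finset ℤ) :
    ∑ i ∈ S, colSum F i = (F.filter (fun p => p.2 ∈ S)).card := by
  rw [Finset.card_eq_sum_card_fiberwise (f := Prod.snd) (s := F.filter (fun p => p.2 ∈ S)) (t := S)
    (fun p hp => (Finset.mem_filter.1 hp).2)]
  apply Finset.sum_congr rfl
  intro i hi
  unfold colSum
  rw [Finset.filter_filter]
  congr 1
  apply Finset.filter_congr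
  intro p hp
  constructor
  · intro h; exact ⟨h ▸ hi, h⟩
  · exact fun h => h.2

lemma rowSum_eq_zero {F : Finset (ℤ × ℤ)} {i : ℤ} (h : i ∉ F.image Prod.fst) : rowSum F i = 0 := by
  unfold rowSum
  rw [Finset.card_eq_zero, Finset.filter_eq_empty_iff]
  intro p hp hpi
  exact h (Finset.mem_image.2 ⟨p, hp, hpi⟩)

lemma colSum_eq_zero {F : Finset (ℤ × ℤ)} {i : ℤ} (h : i ∉ F.image Prod.snd) : colSum F i = 0 := by
  unfold colSum
  rw [Finset.card_eq_zero, Finset.filter_eq_empty_iff]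
  intro p hp hpi
  exact h (Finset.mem_image.2 ⟨p, hp, hpi⟩)



lemma rect_bound (F1 F2 : Finset (ℤ × ℤ)) (hcard : F1.card = F2.card)
    (A B : Finset ℤ) (hAB : A ×ˢ B ⊆ F1) (hout : ∀ p ∈ F1, p.1 ∉ A → p.2 ∈ B)
    (hdisj : ∀ p ∈ F2, p ∉ F1) :
    2 * ((A.card : ℤ) * B.card) ≤ lineError F1 F2 := by
  classical
  set T : Finset ℤ := (F1 ∪ F2).image Prod.fst with hT
  set T' : Finset ℤ := (F1 ∪ F2).image Prod.snd with hT'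
  have hrowsup : ∑ᶠ i : ℤ, |(rowSum F1 i : ℤ) - (rowSum F2 i : ℤ)|
      = ∑ i ∈ T, |(rowSum F1 i : ℤ) - (rowSum F2 i : ℤ)| := by
    apply finsum_eq_sum_of_support_subset
    intro i hi
    simp only [Function.mem_support] at hi
    by_contra hiT
    have h1 : i ∉ F1.image Prod.fst := fun h => hiT (by
      simp only [hT, Finset.image_union, Finset.mem_coe, Finset.mem_union]; exact Or.inl h)
    have h2 : i ∉ F2.image Prod.fst := fun h => hiT (by
      simp only [hT, Finset.image_union, Finset.mem_coe, Finset.mem_union]; exact Or.inr h)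
    rw [rowSum_eq_zero h1, rowSum_eq_zero h2] at hi
    simp at hi
  have hcolsup : ∑ᶠ j : ℤ, |(colSum F1 j : ℤ) - (colSum F2 j : ℤ)|
      = ∑ j ∈ T', |(colSum F1 j : ℤ) - (colSum F2 j : ℤ)| := by
    apply finsum_eq_sum_of_support_subset
    intro i hi
    simp only [Function.mem_support] at hi
    by_contra hiT
    have h1 : i ∉ F1.image Prod.snd := fun h => hiT (by
      simp only [hT', Finset.image_union, Finset.mem_coe, Finset.mem_union]; exact Or.inl h)
    have h2 : i ∉ F2.image Prod.snd := fun h => hiT (by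
      simp only [hT', Finset.image_union, Finset.mem_coe, Finset.mem_union]; exact Or.inr h)
    rw [colSum_eq_zero h1, colSum_eq_zero h2] at hi
    simp at hi
  -- sums over subsets of T
  have hrsum : ∀ (F : Finset (ℤ × ℤ)), F ⊆ F1 ∪ F2 → ∀ (P : ℤ → Prop) [DecidablePred P],
      ∑ i ∈ T.filter P, rowSum F i = (F.filter (fun p => P p.1)).card := by
    intro F hF P _
    rw [sum_rowSum]
    congr 1
    apply Finset.filter_congr
    intro p hp
    simp only [Finset.mem_filter]
    constructor
    · exact fun h => h.2
    · intro h
      exact ⟨Finset.mem_image.2 ⟨p, hF hp, rfl⟩, h⟩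
  have hcsum : ∀ (F : Finset (ℤ × ℤ)), F ⊆ F1 ∪ F2 → ∀ (P : ℤ → Prop) [DecidablePred P],
      ∑ i ∈ T'.filter P, colSum F i = (F.filter (fun p => P p.2)).card := by
    intro F hF P _
    rw [sum_colSum]
    congr 1
    apply Finset.filter_congr
    intro p hp
    simp only [Finset.mem_filter]
    constructor
    · exact fun h => h.2
    · intro h
      exact ⟨Finset.mem_image.2 ⟨p, hF hp, rfl⟩, h⟩
  set n1 := (F1.filter (fun p => p.1 ∈ A)).card with hn1
  set n1' := (F1.filter (fun p => p.1 ∉ A)).card with hn1'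
  set n2 := (F2.filter (fun p => p.1 ∈ A)).card with hn2
  set n2' := (F2.filter (fun p => p.1 ∉ A)).card with hn2'
  set m1 := (F1.filter (fun p => p.2 ∈ B)).card with hm1
  set m1' := (F1.filter (fun p => p.2 ∉ B)).card with hm1'
  set m2 := (F2.filter (fun p => p.2 ∈ B)).card with hm2
  set m2' := (F2.filter (fun p => p.2 ∉ B)).card with hm2'
  have hsub1 : F1 ⊆ F1 ∪ F2 := Finset.subset_union_left
  have hsub2 : F2 ⊆ F1 ∪ F2 := Finset.subset_union_right
  -- row part bound
  have hrow : ((n1 : ℤ) - n2) + ((n2' : ℤ) - n1') ≤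
      ∑ i ∈ T, |(rowSum F1 i : ℤ) - (rowSum F2 i : ℤ)| := by
    rw [← Finset.sum_filter_add_sum_filter_not T (fun i => i ∈ A)]
    have e1 : ∑ i ∈ T.filter (fun i => i ∈ A), ((rowSum F1 i : ℤ) - (rowSum F2 i : ℤ))
        = (n1 : ℤ) - n2 := by
      rw [Finset.sum_sub_distrib]
      rw [← Nat.cast_sum, ← Nat.cast_sum, hrsum F1 hsub1, hrsum F2 hsub2]
    have e2 : ∑ i ∈ T.filter (fun i => ¬ i ∈ A), ((rowSum F1 i : ℤ) - (rowSum F2 i : ℤ))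
        = (n1' : ℤ) - n2' := by
      rw [Finset.sum_sub_distrib]
      rw [← Nat.cast_sum, ← Nat.cast_sum, hrsum F1 hsub1, hrsum F2 hsub2]
    have b1 : (n1 : ℤ) - n2 ≤ ∑ i ∈ T.filter (fun i => i ∈ A), |(rowSum F1 i : ℤ) - (rowSum F2 i : ℤ)| :=
      e1 ▸ le_trans (le_abs_self _) (Finset.abs_sum_le_sum_abs _ _)
    have b2 : (n2' : ℤ) - n1' ≤ ∑ i ∈ T.filter (fun i => ¬ i ∈ A), |(rowSum F1 i : ℤ) - (rowSum F2 i : ℤ)| := by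
      calc (n2' : ℤ) - n1' = -((n1' : ℤ) - n2') := by ring
        _ = -∑ i ∈ T.filter (fun i => ¬ i ∈ A), ((rowSum F1 i : ℤ) - (rowSum F2 i : ℤ)) := by rw [e2]
        _ ≤ ∑ i ∈ T.filter (fun i => ¬ i ∈ A), |(rowSum F1 i : ℤ) - (rowSum F2 i : ℤ)| :=
            le_trans (neg_le_abs _) (Finset.abs_sum_le_sum_abs _ _)
    linarith
  have hcol : ((m1 : ℤ) - m2) + ((m2' : ℤ) - m1') ≤
      ∑ j ∈ T', |(colSum F1 j : ℤ) - (colSum F2 j : ℤ)| := by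
    rw [← Finset.sum_filter_add_sum_filter_not T' (fun j => j ∈ B)]
    have e1 : ∑ j ∈ T'.filter (fun j => j ∈ B), ((colSum F1 j : ℤ) - (colSum F2 j : ℤ))
        = (m1 : ℤ) - m2 := by
      rw [Finset.sum_sub_distrib]
      rw [← Nat.cast_sum, ← Nat.cast_sum, hcsum F1 hsub1, hcsum F2 hsub2]
    have e2 : ∑ j ∈ T'.filter (fun j => ¬ j ∈ B), ((colSum F1 j : ℤ) - (colSum F2 j : ℤ))
        = (m1' : ℤ) - m2' := by
      rw [Finset.sum_sub_distrib]
      rw [← Nat.cast_sum, ← Nat.cast_sum, hcsum F1 hsub1, hcsum F2 hsub2]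
    have b1 : (m1 : ℤ) - m2 ≤ ∑ j ∈ T'.filter (fun j => j ∈ B), |(colSum F1 j : ℤ) - (colSum F2 j : ℤ)| :=
      e1 ▸ le_trans (le_abs_self _) (Finset.abs_sum_le_sum_abs _ _)
    have b2 : (m2' : ℤ) - m1' ≤ ∑ j ∈ T'.filter (fun j => ¬ j ∈ B), |(colSum F1 j : ℤ) - (colSum F2 j : ℤ)| := by
      calc (m2' : ℤ) - m1' = -((m1' : ℤ) - m2') := by ring
        _ = -∑ j ∈ T'.filter (fun j => ¬ j ∈ B), ((colSum F1 j : ℤ) - (colSum F2 j : ℤ)) := by rw [e2]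
        _ ≤ ∑ j ∈ T'.filter (fun j => ¬ j ∈ B), |(colSum F1 j : ℤ) - (colSum F2 j : ℤ)| :=
            le_trans (neg_le_abs _) (Finset.abs_sum_le_sum_abs _ _)
    linarith
  -- cardinality identities
  have key1 : n1 + m1 = F1.card + A.card * B.card := by
    have h := Finset.card_union_add_card_inter (F1.filter (fun p => p.1 ∈ A))
      (F1.filter (fun p => p.2 ∈ B))
    have hun : F1.filter (fun p => p.1 ∈ A) ∪ F1.filter (fun p => p.2 ∈ B) = F1 := by
      ext p
      simp only [Finset.mem_union, Finset.mem_filter]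
      constructor
      · rintro (h | h) <;> exact h.1
      · intro hp
        by_cases hA : p.1 ∈ A
        · exact Or.inl ⟨hp, hA⟩
        · exact Or.inr ⟨hp, hout p hp hA⟩
    have hin : F1.filter (fun p => p.1 ∈ A) ∩ F1.filter (fun p => p.2 ∈ B) = A ×ˢ B := by
      ext p
      simp only [Finset.mem_inter, Finset.mem_filter, Finset.mem_product]
      constructor
      · rintro ⟨⟨_, h1⟩, ⟨_, h2⟩⟩; exact ⟨h1, h2⟩
      · intro hp
        have := hAB (Finset.mem_product.2 hp)
        exact ⟨⟨this, hp.1⟩, ⟨this, hp.2⟩⟩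
    rw [hun, hin, Finset.card_product] at h
    omega
  have key2 : n2 + m2 ≤ F2.card := by
    have h := Finset.card_union_add_card_inter (F2.filter (fun p => p.1 ∈ A))
      (F2.filter (fun p => p.2 ∈ B))
    have hin : F2.filter (fun p => p.1 ∈ A) ∩ F2.filter (fun p => p.2 ∈ B) = ∅ := by
      rw [Finset.eq_empty_iff_forall_notMem]
      intro p hp
      simp only [Finset.mem_inter, Finset.mem_filter] at hp
      exact hdisj p hp.1.1 (hAB (Finset.mem_product.2 ⟨hp.1.2, hp.2.2⟩))
    have hle : (F2.filter (fun p => p.1 ∈ A) ∪ F2.filter (fun p => p.2 ∈ B)).card ≤ F2.card :=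
      Finset.card_le_card (Finset.union_subset (Finset.filter_subset _ _) (Finset.filter_subset _ _))
    rw [hin] at h
    simp only [Finset.card_empty] at h
    omega
  have hn1sum : n1 + n1' = F1.card := Finset.card_filter_add_card_filter_not _
  have hn2sum : n2 + n2' = F2.card := Finset.card_filter_add_card_filter_not _
  have hm1sum : m1 + m1' = F1.card := Finset.card_filter_add_card_filter_not _
  have hm2sum : m2 + m2' = F2.card := Finset.card_filter_add_card_filter_not _
  have hABcast : ((A.card * B.card : ℕ) : ℤ) = (A.card : ℤ) * B.card := by push_cast; ring
  unfold lineError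
  rw [hrowsup, hcolsup]
  have kk1 : (n1 : ℤ) + m1 = F1.card + (A.card : ℤ) * B.card := by
    rw [← hABcast]; exact_mod_cast congrArg (Nat.cast : ℕ → ℤ) key1
  have kk2 : (n2 : ℤ) + m2 ≤ F2.card := by exact_mod_cast key2
  have hc : (F1.card : ℤ) = F2.card := by exact_mod_cast hcard
  have h1 : (n1 : ℤ) + n1' = F1.card := by exact_mod_cast hn1sum
  have h2 : (n2 : ℤ) + n2' = F2.card := by exact_mod_cast hn2sum
  have h3 : (m1 : ℤ) + m1' = F1.card := by exact_mod_cast hm1sum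
  have h4 : (m2 : ℤ) + m2' = F2.card := by exact_mod_cast hm2sum
  linarith

lemma rowSum_eq_sum (F : Finset (ℤ × ℤ)) (i : ℤ) :
    rowSum F i = ∑ p ∈ F, if p.1 = i then 1 else 0 := Finset.card_filter _ _

lemma colSum_eq_sum (F : Finset (ℤ × ℤ)) (j : ℤ) :
    colSum F j = ∑ p ∈ F, if p.2 = j then 1 else 0 := Finset.card_filter _ _

lemma noswitch (F : Finset (ℤ × ℤ)) (hU : UniquelyDetermined F)
    {a b c d : ℤ} (h1 : (a, b) ∈ F) (h2 : (c, d) ∈ F) : (a, d) ∈ F ∨ (c, b) ∈ F := by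
  by_contra hcon
  push_neg at hcon
  obtain ⟨had, hcb⟩ := hcon
  have hac : a ≠ c := fun h => had (h ▸ h2)
  have hbd : b ≠ d := fun h => had (h ▸ h1)
  have hne1 : ((a, b) : ℤ × ℤ) ≠ (c, d) := fun h => hac (congrArg Prod.fst h)
  set F' : Finset (ℤ × ℤ) := (F.erase (a, b)).erase (c, d) with hF'
  set G : Finset (ℤ × ℤ) := insert (a, d) (insert (c, b) F') with hG
  have hcdF' : (c, d) ∈ F.erase (a, b) := Finset.mem_erase.2 ⟨fun h => hne1 h.symm, h2⟩
  have habF : (a, b) ∈ F := h1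
  have hadF' : (a, d) ∉ insert (c, b) F' := by
    simp only [Finset.mem_insert, hF', Finset.mem_erase]
    rintro (h | h)
    · exact hac (congrArg Prod.fst h)
    · exact had h.2.2
  have hcbF' : (c, b) ∉ F' := by
    simp only [hF', Finset.mem_erase]
    rintro h
    exact hcb h.2.2
  have hsumF : ∀ (f : ℤ × ℤ → ℕ), ∑ p ∈ F, f p = f (a, b) + (f (c, d) + ∑ p ∈ F', f p) := by
    intro f
    rw [← Finset.add_sum_erase _ _ habF, ← Finset.add_sum_erase _ _ hcdF']
  have hsumG : ∀ (f : ℤ × ℤ → ℕ), ∑ p ∈ G, f p = f (a, d) + (f (c, b) + ∑ p ∈ F', f p) := by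
    intro f
    rw [hG, Finset.sum_insert hadF', Finset.sum_insert hcbF']
  have hGF : G = F := by
    apply hU
    · intro i
      rw [rowSum_eq_sum, rowSum_eq_sum, hsumF, hsumG]
    · intro j
      rw [colSum_eq_sum, colSum_eq_sum, hsumF, hsumG]
      simp only
      ring
  exact had (hGF ▸ Finset.mem_insert_self _ _)

def rowSupp (F : Finset (ℤ × ℤ)) (a : ℤ) : Finset ℤ := (F.filter (fun p => p.1 = a)).image Prod.snd
def colSupp (F : Finset (ℤ × ℤ)) (b : ℤ) : Finset ℤ := (F.filter (fun p => p.2 = b)).image Prod.fst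

lemma mem_rowSupp {F : Finset (ℤ × ℤ)} {a b : ℤ} : b ∈ rowSupp F a ↔ (a, b) ∈ F := by
  unfold rowSupp
  simp only [Finset.mem_image, Finset.mem_filter]
  constructor
  · rintro ⟨p, ⟨hp, hp1⟩, hp2⟩
    rwa [← hp1, ← hp2]
  · intro h
    exact ⟨(a, b), ⟨h, rfl⟩, rfl⟩

lemma mem_colSupp {F : Finset (ℤ × ℤ)} {a b : ℤ} : a ∈ colSupp F b ↔ (a, b) ∈ F := by
  unfold colSupp
  simp only [Finset.mem_image, Finset.mem_filter]
  constructor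
  · rintro ⟨p, ⟨hp, hp2⟩, hp1⟩
    rwa [← hp1, ← hp2]
  · intro h
    exact ⟨(a, b), ⟨h, rfl⟩, rfl⟩

lemma rowSupp_card (F : Finset (ℤ × ℤ)) (a : ℤ) : (rowSupp F a).card = rowSum F a := by
  unfold rowSupp rowSum
  apply Finset.card_image_of_injOn
  intro p hp q hq hpq
  simp only [Finset.mem_coe, Finset.mem_filter] at hp hq
  exact Prod.ext (hp.2.trans hq.2.symm) hpq

lemma colSupp_card (F : Finset (ℤ × ℤ)) (b : ℤ) : (colSupp F b).card = colSum F b := by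
  unfold colSupp colSum
  apply Finset.card_image_of_injOn
  intro p hp q hq hpq
  simp only [Finset.mem_coe, Finset.mem_filter] at hp hq
  exact Prod.ext hpq (hp.2.trans hq.2.symm)

lemma rowSupp_chain (F : Finset (ℤ × ℤ)) (hU : UniquelyDetermined F) (a c : ℤ) :
    rowSupp F a ⊆ rowSupp F c ∨ rowSupp F c ⊆ rowSupp F a := by
  by_cases h : rowSupp F a ⊆ rowSupp F c
  · exact Or.inl h
  · right
    obtain ⟨b, hb, hbc⟩ := Finset.not_subset.1 h
    intro d hd
    rcases noswitch F hU (mem_rowSupp.1 hb) (mem_rowSupp.1 hd) with h' | h'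
    · exact mem_rowSupp.2 h'
    · exact absurd (mem_rowSupp.2 h') hbc

lemma colSupp_chain (F : Finset (ℤ × ℤ)) (hU : UniquelyDetermined F) (b d : ℤ) :
    colSupp F b ⊆ colSupp F d ∨ colSupp F d ⊆ colSupp F b := by
  by_cases h : colSupp F b ⊆ colSupp F d
  · exact Or.inl h
  · right
    obtain ⟨a, ha, had⟩ := Finset.not_subset.1 h
    intro c hc
    rcases noswitch F hU (mem_colSupp.1 ha) (mem_colSupp.1 hc) with h' | h'
    · exact absurd (mem_colSupp.2 h') had
    · exact mem_colSupp.2 h'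

lemma count_ge (F1 : Finset (ℤ × ℤ)) (l : List ℕ)
    (hl : l = Multiset.sort ((F1.image Prod.fst).val.map (fun i => rowSum F1 i)) (· ≥ ·))
    (i : ℕ) (h : i < l.length) (r : ℕ) (hr : r = l.get ⟨i, h⟩) :
    i + 1 ≤ ((F1.image Prod.fst).filter (fun a => r ≤ rowSum F1 a)).card := by
  classical
  set R := F1.image Prod.fst with hR
  have hsort : List.Pairwise (· ≥ ·) l := hl ▸ Multiset.pairwise_sort _ _
  have hcoe : (↑l : Multiset ℕ) = R.val.map (fun i => rowSum F1 i) := by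
    rw [hl]; exact Multiset.sort_eq _ _
  have hcard : ((R.filter (fun a => r ≤ rowSum F1 a)).card : ℕ)
      = Multiset.countP (fun x => r ≤ x) (↑l : Multiset ℕ) := by
    rw [hcoe, Multiset.countP_map, Finset.card_def, Finset.filter_val]
  rw [hcard, Multiset.coe_countP]
  have hlen : (l.take (i+1)).length = i + 1 := by
    rw [List.length_take]; omega
  have htake : List.countP (fun b => decide (r ≤ b)) (l.take (i+1)) = i + 1 := by
    have hall : List.countP (fun b => decide (r ≤ b)) (l.take (i+1)) = (l.take (i+1)).length := by
      rw [List.countP_eq_length]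
      intro a ha
      rw [List.mem_take_iff_getElem] at ha
      obtain ⟨j, hj, hja⟩ := ha
      simp only [decide_eq_true_eq]
      rw [← hja, hr]
      rcases Nat.lt_or_ge j i with hlt | hge
      · exact hsort.rel_get_of_lt (a := ⟨j, by omega⟩) (b := ⟨i, h⟩) hlt
      · have : j = i := by omega
        subst this
        simp [List.get]
    rw [hall, hlen]
  calc i + 1 = List.countP (fun b => decide (r ≤ b)) (l.take (i+1)) := htake.symm
    _ ≤ List.countP (fun b => decide (r ≤ b)) (l.take (i+1))
        + List.countP (fun b => decide (r ≤ b)) (l.drop (i+1)) := Nat.le_add_right _ _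
    _ = List.countP (fun b => decide (r ≤ b)) l := by
        rw [← List.countP_append, List.take_append_drop]

theorem row_sums_bound_disjoint
    (F1 F2 : Finset (ℤ × ℤ))
    (hU : UniquelyDetermined F1)
    (hcard : F1.card = F2.card)
    (hdisj : F1 ∩ F2 = ∅)
    (α : ℕ) (hα : 0 < α)
    (herr : lineError F1 F2 = 2 * α)
    -- `l` is the list of the row sums of the nonempty rows of `F1`,
    -- in nonincreasing order
    (l : List ℕ)
    (hl : l = Multiset.sort ((F1.image Prod.fst).val.map (fun i => rowSum F1 i)) (· ≥ ·)) :
    -- the `(i+1)`-st largest row sum is at most `α / (i+1)`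
    (∀ (i : ℕ) (h : i < l.length), ((l.get ⟨i, h⟩ : ℝ)) ≤ (α : ℝ) / ((i : ℝ) + 1)) ∧
    -- the number of nonempty rows is at most `α`
    (F1.image Prod.fst).card ≤ α ∧
    -- the number of nonempty columns is at most `α`
    (F1.image Prod.snd).card ≤ α := by
  classical
  have hdisj' : ∀ p ∈ F2, p ∉ F1 := by
    intro p hp2 hp1
    have hmem : p ∈ F1 ∩ F2 := Finset.mem_inter.2 ⟨hp1, hp2⟩
    rw [hdisj] at hmem
    exact absurd hmem (Finset.notMem_empty p)
  -- core counting bound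
  have main : ∀ r : ℕ, 0 < r →
      (((F1.image Prod.fst).filter (fun a => r ≤ rowSum F1 a)).Nonempty) →
      ((F1.image Prod.fst).filter (fun a => r ≤ rowSum F1 a)).card * r ≤ α := by
    intro r hr hne
    set A := (F1.image Prod.fst).filter (fun a => r ≤ rowSum F1 a) with hA
    obtain ⟨m, hmA, hmin⟩ := Finset.exists_min_image A (fun a => rowSum F1 a) hne
    have hmr : r ≤ rowSum F1 m := (Finset.mem_filter.1 hmA).2
    set B := rowSupp F1 m with hB
    have hBcard : B.card = rowSum F1 m := rowSupp_card F1 m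
    have hAB : A ×ˢ B ⊆ F1 := by
      intro p hp
      rw [Finset.mem_product] at hp
      obtain ⟨hp1, hp2⟩ := hp
      rcases rowSupp_chain F1 hU m p.1 with hsub | hsub
      · have hmem : p.2 ∈ rowSupp F1 p.1 := hsub hp2
        rw [mem_rowSupp] at hmem
        rwa [Prod.mk.eta] at hmem
      · have hcard_le : rowSum F1 m ≤ rowSum F1 p.1 := hmin p.1 hp1
        have heq : rowSupp F1 p.1 = rowSupp F1 m :=
          Finset.eq_of_subset_of_card_le hsub
            (by rw [rowSupp_card, rowSupp_card]; exact hcard_le)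
        have hmem : p.2 ∈ rowSupp F1 p.1 := heq.symm ▸ hp2
        rw [mem_rowSupp] at hmem
        rwa [Prod.mk.eta] at hmem
    have hout : ∀ p ∈ F1, p.1 ∉ A → p.2 ∈ B := by
      intro p hp hpA
      have hmemim : p.1 ∈ F1.image Prod.fst := Finset.mem_image.2 ⟨p, hp, rfl⟩
      have hlt : ¬ r ≤ rowSum F1 p.1 := fun hge =>
        hpA (Finset.mem_filter.2 ⟨hmemim, hge⟩)
      rcases rowSupp_chain F1 hU p.1 m with hsub | hsub
      · have hmem : p.2 ∈ rowSupp F1 p.1 := mem_rowSupp.2 (by rwa [Prod.mk.eta])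
        exact hsub hmem
      · exfalso
        have hcc := Finset.card_le_card hsub
        rw [rowSupp_card, rowSupp_card] at hcc
        omega
    have hrect := rect_bound F1 F2 hcard A B hAB hout hdisj'
    rw [herr] at hrect
    have hint : (A.card : ℤ) * B.card ≤ α := by linarith
    have hnat : A.card * B.card ≤ α := by exact_mod_cast hint
    calc A.card * r ≤ A.card * B.card := Nat.mul_le_mul_left _ (by omega)
      _ ≤ α := hnat
  -- part 1
  have part1 : ∀ (i : ℕ) (h : i < l.length), ((l.get ⟨i, h⟩ : ℝ)) ≤ (α : ℝ) / ((i : ℝ) + 1) := by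
    intro i h
    set r := l.get ⟨i, h⟩ with hr
    rcases Nat.eq_zero_or_pos r with hz | hpos
    · rw [hz]
      push_cast
      positivity
    · have hcount := count_ge F1 l hl i h r hr
      have hne : ((F1.image Prod.fst).filter (fun a => r ≤ rowSum F1 a)).Nonempty := by
        rw [← Finset.card_pos]; omega
      have hmm := main r hpos hne
      have hfinal : (i + 1) * r ≤ α :=
        le_trans (Nat.mul_le_mul_right r hcount) hmm
      rw [le_div_iff₀ (by positivity : (0:ℝ) < (i : ℝ) + 1)]
      have hcast : (((i + 1) * r : ℕ) : ℝ) ≤ (α : ℝ) := Nat.cast_le.2 hfinal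
      push_cast at hcast
      nlinarith
  refine ⟨part1, ?_, ?_⟩
  -- part 2 : rows
  · rcases (F1.image Prod.fst).eq_empty_or_nonempty with he | hne
    · rw [he]; simp
    · have hAeq : (F1.image Prod.fst).filter (fun a => 1 ≤ rowSum F1 a) = F1.image Prod.fst := by
        apply Finset.filter_true_of_mem
        intro a ha
        obtain ⟨p, hp, hpa⟩ := Finset.mem_image.1 ha
        have hmem : p ∈ F1.filter (fun q => q.1 = a) := Finset.mem_filter.2 ⟨hp, hpa⟩
        exact Finset.card_pos.2 ⟨p, hmem⟩
      have hne' : ((F1.image Prod.fst).filter (fun a => 1 ≤ rowSum F1 a)).Nonempty := by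
        rw [hAeq]; exact hne
      have := main 1 one_pos hne'
      rw [hAeq, Nat.mul_one] at this
      exact this
  -- part 3 : columns
  · rcases (F1.image Prod.snd).eq_empty_or_nonempty with he | hne
    · rw [he]; simp
    · obtain ⟨m, hmB, hmin⟩ := Finset.exists_min_image (F1.image Prod.snd)
        (fun b => colSum F1 b) hne
      set A := colSupp F1 m with hA
      set B := F1.image Prod.snd with hB
      have hAB : A ×ˢ B ⊆ F1 := by
        intro p hp
        rw [Finset.mem_product] at hp
        obtain ⟨hp1, hp2⟩ := hp
        rcases colSupp_chain F1 hU m p.2 with hsub | hsub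
        · have hmem : p.1 ∈ colSupp F1 p.2 := hsub hp1
          rw [mem_colSupp] at hmem
          rwa [Prod.mk.eta] at hmem
        · have heq : colSupp F1 p.2 = colSupp F1 m :=
            Finset.eq_of_subset_of_card_le hsub
              (by rw [colSupp_card, colSupp_card]; exact hmin p.2 hp2)
          have hmem : p.1 ∈ colSupp F1 p.2 := heq.symm ▸ hp1
          rw [mem_colSupp] at hmem
          rwa [Prod.mk.eta] at hmem
      have hout : ∀ p ∈ F1, p.1 ∉ A → p.2 ∈ B := fun p hp _ =>
        Finset.mem_image.2 ⟨p, hp, rfl⟩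
      have hA1 : 1 ≤ A.card := by
        obtain ⟨p, hp, hpm⟩ := Finset.mem_image.1 hmB
        have hmem : p.1 ∈ colSupp F1 m := mem_colSupp.2 (by rwa [← hpm, Prod.mk.eta])
        exact Finset.card_pos.2 ⟨p.1, hmem⟩
      have hrect := rect_bound F1 F2 hcard A B hAB hout hdisj'
      rw [herr] at hrect
      have hint : (A.card : ℤ) * B.card ≤ α := by linarith
      have hnat : A.card * B.card ≤ α := by exact_mod_cast hint
      calc B.card ≤ A.card * B.card := Nat.le_mul_of_pos_left _ (by omega)
        _ ≤ α := hnat
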